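/- Let e₁, e₂ be symmetric trace-free 2×2 real matrices with e₁ ≠ e₂. Then there exist a ∈ ℝ² \ {0} and n ∈ ℝ² with |n| = 1 such that e₁ - e₂ = (1/2)(a ⊗ n + n ⊗ a), and moreover a · n = 0. -/

import Mathlib

open Matrix

/-- Any two distinct symmetric trace-free 2×2 real matrices are symmetrized rank-one
connected: `e₁ - e₂ = (1/2)(a ⊗ n + n ⊗ a)` with `a ≠ 0`, `|n| = 1` and `a ⊥ n`. -/
theorem stmt2 (e₁ e₂ : Matrix (Fin 2) (Fin 2) ℝ)
    (h₁s : e₁.IsSymm) (h₂s : e₂.IsSymm)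
    (h₁t : e₁.trace = 0) (h₂t : e₂.trace = 0) (hne : e₁ ≠ e₂) :
    ∃ (a n : Fin 2 → ℝ), a ≠ 0 ∧ n ⬝ᵥ n = 1 ∧ a ⬝ᵥ n = 0 ∧
      e₁ - e₂ = (1 / 2 : ℝ) • (vecMulVec a n + vecMulVec n a) := by
  set E := e₁ - e₂ with hE
  have hEs : E.IsSymm := h₁s.sub h₂s
  have hsym : E 1 0 = E 0 1 := by
    conv_lhs => rw [← hEs]
    simp [Matrix.transpose_apply]
  have htr : E 0 0 + E 1 1 = 0 := by
    have : E.trace = 0 := by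
      simp [hE, Matrix.trace_sub, h₁t, h₂t]
    simpa [Matrix.trace_fin_two] using this
  set a : ℝ := E 0 0 with ha
  set b : ℝ := E 0 1 with hb
  have hE11 : E 1 1 = -a := by linarith
  have hab : a ≠ 0 ∨ b ≠ 0 := by
    by_contra h
    push_neg at h
    apply hne
    have hE0 : E = 0 := by
      ext i j
      fin_cases i <;> fin_cases j <;>
        simp [← ha, ← hb, h.1, h.2, hsym, hE11]
    exact sub_eq_zero.mp hE0
  set r : ℝ := Real.sqrt (a ^ 2 + b ^ 2) with hrdef
  have hab2 : 0 < a ^ 2 + b ^ 2 := by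
    rcases hab with h | h <;> positivity
  have hr2 : r ^ 2 = a ^ 2 + b ^ 2 := Real.sq_sqrt (le_of_lt hab2)
  have hr : 0 < r := Real.sqrt_pos.mpr hab2
  have hrne : r ≠ 0 := ne_of_gt hr
  have hbr : -r ≤ b := by nlinarith [sq_nonneg (r + b), sq_nonneg a]
  -- the target matrix identity reduces to four scalar equations
  have key : ∀ (A N : Fin 2 → ℝ),
      a = (1/2) * (A 0 * N 0 + N 0 * A 0) →
      b = (1/2) * (A 0 * N 1 + N 0 * A 1) →
      b = (1/2) * (A 1 * N 0 + N 1 * A 0) →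
      -a = (1/2) * (A 1 * N 1 + N 1 * A 1) →
      E = (1 / 2 : ℝ) • (vecMulVec A N + vecMulVec N A) := by
    intro A N h00 h01 h10 h11
    ext i j
    fin_cases i <;> fin_cases j <;>
      simp [vecMulVec_apply, ← ha, ← hb, hsym, hE11, smul_eq_mul] <;> linarith
  by_cases hdeg : b = -r
  · -- degenerate case: a = 0, b = -r
    have ha0 : a = 0 := by nlinarith
    refine ⟨![-2 * r, 0], ![0, 1], ?_, ?_, ?_, ?_⟩
    · intro h
      have := congrFun h 0
      simp at this
      nlinarith
    · simp [dotProduct, Fin.sum_univ_two]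
    · simp [dotProduct, Fin.sum_univ_two]
    · apply key <;> simp [ha0, hdeg] <;> ring
  · have hrb : 0 < r + b := lt_of_le_of_ne (by linarith) (by intro h; exact hdeg (by linarith))
    obtain ⟨x, hx, hx2⟩ : ∃ x : ℝ, 0 < x ∧ x ^ 2 = (r + b) / (2 * r) :=
      ⟨Real.sqrt ((r + b) / (2 * r)), Real.sqrt_pos.mpr (by positivity),
        Real.sq_sqrt (by positivity)⟩
    have hxne : x ≠ 0 := ne_of_gt hx
    have hX : 2 * r * x ^ 2 = r + b := by rw [hx2]; field_simp
    refine ⟨![a / x, 2 * r * x], ![x, -a / (2 * r * x)], ?_, ?_, ?_, ?_⟩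
    · intro h
      have h1 := congrFun h 1
      simp at h1
      rcases h1 with h1 | h1 <;> linarith
    · simp only [dotProduct, Fin.sum_univ_two, Matrix.cons_val_zero,
        Matrix.cons_val_one, Matrix.head_cons]
      field_simp
      linear_combination (2*r*x^2 + b - r)*hX - hr2
    · simp only [dotProduct, Fin.sum_univ_two, Matrix.cons_val_zero,
        Matrix.cons_val_one, Matrix.head_cons]
      field_simp
      ring
    · apply key <;>
        simp only [Matrix.cons_val_zero, Matrix.cons_val_one, Matrix.head_cons]
      · field_simp
        ring
      · field_simp
        linear_combination (-2*r*x^2 + b - r)*hX - hr2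
      · field_simp
        linear_combination (-2*r*x^2 + b - r)*hX - hr2
      · field_simp
        ring
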